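/- Let H > 0 and let x1, x2, x3 : ℝ → ℝ be continuously differentiable functions satisfying the Euler top system ẋ1(t) = x2(t)·x3(t), ẋ2(t) = −x1(t)·x3(t), ẋ3(t) = x1(t)·x2(t) and the constraint x1(t)² + x2(t)² = 2H for all t. Then there exists a twice differentiable function θ : ℝ → ℝ such that x1(t) = √(2H)·cos(θ(t)/2), x2(t) = √(2H)·sin(θ(t)/2), x3(t) = −θ̇(t)/2 for all t, and θ satisfies the pendulum equation θ̈(t) + 2H·sin θ(t) = 0 for all t. -/

import Mathlib

/-- A solution of the Euler top system lying on the level surface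
`x1² + x2² = 2H` comes from a solution of the pendulum equation
`θ̈ + 2H sin θ = 0` via an angle lift. -/
theorem euler_top_to_pendulum_H
    (H : ℝ) (hH : 0 < H) (x1 x2 x3 : ℝ → ℝ)
    (hx1 : ContDiff ℝ 1 x1) (hx2 : ContDiff ℝ 1 x2) (hx3 : ContDiff ℝ 1 x3)
    (h1 : ∀ t, deriv x1 t = x2 t * x3 t)
    (h2 : ∀ t, deriv x2 t = -(x1 t * x3 t))
    (h3 : ∀ t, deriv x3 t = x1 t * x2 t)
    (hlevel : ∀ t, (x1 t) ^ 2 + (x2 t) ^ 2 = 2 * H) :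
    ∃ θ : ℝ → ℝ,
      Differentiable ℝ θ ∧ Differentiable ℝ (deriv θ) ∧
      (∀ t, x1 t = Real.sqrt (2 * H) * Real.cos (θ t / 2)) ∧
      (∀ t, x2 t = Real.sqrt (2 * H) * Real.sin (θ t / 2)) ∧
      (∀ t, x3 t = -(deriv θ t) / 2) ∧
      (∀ t, deriv (deriv θ) t + 2 * H * Real.sin (θ t) = 0) := by
  have h2H : (0:ℝ) < 2 * H := by linarith
  set r := Real.sqrt (2 * H) with hrdef
  have hr0 : 0 < r := Real.sqrt_pos.mpr h2H
  have hr2 : r ^ 2 = 2 * H := Real.sq_sqrt h2H.le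
  -- initial angle
  set z : ℂ := ⟨x1 0 / r, x2 0 / r⟩ with hz
  have hznorm : ‖z‖ = 1 := by
    have hl := hlevel 0
    rw [Complex.norm_def, Complex.normSq_mk]
    have : x1 0 / r * (x1 0 / r) + x2 0 / r * (x2 0 / r) = 1 := by
      field_simp
      nlinarith [hr2, hlevel 0]
    rw [this, Real.sqrt_one]
  have hzne : z ≠ 0 := by
    intro h; rw [h] at hznorm; simp at hznorm
  set φ0 : ℝ := Complex.arg z with hφ0
  have hc0 : Real.cos φ0 = x1 0 / r := by
    rw [hφ0, Complex.cos_arg hzne, hznorm]; simp [hz]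
  have hs0 : Real.sin φ0 = x2 0 / r := by
    rw [hφ0, Complex.sin_arg, hznorm]; simp [hz]
  -- angle function
  set φ : ℝ → ℝ := fun t => φ0 - ∫ s in (0:ℝ)..t, x3 s with hφdef
  have hcx3 : Continuous x3 := hx3.continuous
  have hφd : ∀ t, HasDerivAt φ (-(x3 t)) t := by
    intro t
    have hint : HasDerivAt (fun u => ∫ s in (0:ℝ)..u, x3 s) (x3 t) t :=
      intervalIntegral.integral_hasDerivAt_right
        (hcx3.intervalIntegrable _ _)
        (hcx3.stronglyMeasurableAtFilter _ _)
        hcx3.continuousAt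
    simpa using hint.const_sub φ0
  have hx1at : ∀ t, HasDerivAt x1 (x2 t * x3 t) t := fun t => by
    have := (hx1.differentiable one_ne_zero t).hasDerivAt
    rwa [h1 t] at this
  have hx2at : ∀ t, HasDerivAt x2 (-(x1 t * x3 t)) t := fun t => by
    have := (hx2.differentiable one_ne_zero t).hasDerivAt
    rwa [h2 t] at this
  have hx3at : ∀ t, HasDerivAt x3 (x1 t * x2 t) t := fun t => by
    have := (hx3.differentiable one_ne_zero t).hasDerivAt
    rwa [h3 t] at this
  -- the conserved quantity
  set g : ℝ → ℝ := fun t => x1 t * Real.cos (φ t) + x2 t * Real.sin (φ t) with hgdef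
  have hgd : ∀ t, HasDerivAt g 0 t := by
    intro t
    have hcos : HasDerivAt (fun t => Real.cos (φ t))
        (-Real.sin (φ t) * -(x3 t)) t :=
      (Real.hasDerivAt_cos (φ t)).comp t (hφd t)
    have hsin : HasDerivAt (fun t => Real.sin (φ t))
        (Real.cos (φ t) * -(x3 t)) t :=
      (Real.hasDerivAt_sin (φ t)).comp t (hφd t)
    have h := ((hx1at t).mul hcos).add ((hx2at t).mul hsin)
    exact h.congr_deriv (by ring)
  have hgconst : ∀ t, g t = g 0 := fun t =>
    is_const_of_deriv_eq_zero (fun s => (hgd s).differentiableAt)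
      (fun s => (hgd s).deriv) t 0
  have hφ0eq : φ 0 = φ0 := by simp [hφdef]
  have hg0 : g 0 = r := by
    rw [hgdef]
    simp only [hφ0eq]
    rw [hc0, hs0]
    field_simp
    nlinarith [hr2, hlevel 0]
  -- identification of x1, x2 with the lift
  have key : ∀ t, x1 t = r * Real.cos (φ t) ∧ x2 t = r * Real.sin (φ t) := by
    intro t
    have hpy := Real.sin_sq_add_cos_sq (φ t)
    have hgt : x1 t * Real.cos (φ t) + x2 t * Real.sin (φ t) = r := by
      have := hgconst t; rw [hg0] at this; exact this
    have hA : (x1 t - r * Real.cos (φ t)) ^ 2 + (x2 t - r * Real.sin (φ t)) ^ 2 = 0 := by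
      nlinarith [hlevel t, hr2, hpy, hgt]
    have h1' := (add_eq_zero_iff_of_nonneg (sq_nonneg _) (sq_nonneg _)).mp hA
    constructor
    · have := pow_eq_zero_iff (n := 2) (by norm_num) |>.mp h1'.1
      linarith [sub_eq_zero.mp this]
    · have := pow_eq_zero_iff (n := 2) (by norm_num) |>.mp h1'.2
      linarith [sub_eq_zero.mp this]
  -- the pendulum angle
  refine ⟨fun t => 2 * φ t, ?_, ?_, ?_, ?_, ?_, ?_⟩
  all_goals {
    have hθd : ∀ t, HasDerivAt (fun t => 2 * φ t) (-(2 * x3 t)) t := by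
      intro t
      have := (hφd t).const_mul 2
      exact this.congr_deriv (by ring)
    have hdθ : deriv (fun t => 2 * φ t) = fun t => -(2 * x3 t) :=
      funext fun t => (hθd t).deriv
    first
    | exact fun t => (hθd t).differentiableAt
    | (rw [hdθ]
       exact ((hx3.differentiable one_ne_zero).const_mul 2).neg)
    | (intro t
       have h2φ : (2 * φ t) / 2 = φ t := by ring
       rw [h2φ]
       exact (key t).1)
    | (intro t
       have h2φ : (2 * φ t) / 2 = φ t := by ring
       rw [h2φ]
       exact (key t).2)
    | (intro t
       rw [hdθ]
       ring1)
    | (intro t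
       have hd2 : HasDerivAt (fun t => -(2 * x3 t)) (-(2 * (x1 t * x2 t))) t :=
        ((hx3at t).const_mul 2).neg
       rw [hdθ, hd2.deriv, Real.sin_two_mul]
       rw [(key t).1, (key t).2]
       linear_combination (-2 : ℝ) * Real.sin (φ t) * Real.cos (φ t) * hr2)
  }
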